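/- Define ζ(t) = ((3/4)·(t·√(t²−1) − log(t + √(t²−1))))^{2/3} for t > 1. Then, as t → 1⁺, 2^{−1/3}·ζ(t) = (t−1) + (1/10)(t−1)² − (2/175)(t−1)³ + (37/15750)(t−1)⁴ + O((t−1)⁵). -/
import Mathlib

set_option maxHeartbeats 1000000

open Asymptotics

/-- The Liouville variable `ζ(t) = ((3/4)(t√(t²−1) − log(t+√(t²−1))))^{2/3}` of the
turning point analysis for Hermite polynomials, for `t > 1`. -/
noncomputable def zetaHer (t : ℝ) : ℝ :=
  ((3 / 4) * (t * Real.sqrt (t ^ 2 - 1) - Real.log (t + Real.sqrt (t ^ 2 - 1)))) ^ ((2 : ℝ) / 3)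

/-- Auxiliary polynomial: a Puiseux-type approximation of
`((1+s)√(s²+2s) − log(1+s+√(s²+2s)))/√(s²+2s)` near `s = 0`. -/
noncomputable def Cpol (s : ℝ) : ℝ :=
  4/3*s - 2/15*s^2 + 2/35*s^3 - 8/315*s^4 + 184/63*s^5 + 1264/21*s^6 + 8336/45*s^7
    + 7936/45*s^8 + 256/5*s^9

lemma zh_log_upper (s r : ℝ) (hs : 0 < s) (hr : 0 < r) (hx : s + r < 1) :
    |((s+r) - (s+r)^2/2 + (s+r)^3/3 - (s+r)^4/4 + (s+r)^5/5 - (s+r)^6/6 + (s+r)^7/7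
        - (s+r)^8/8 + (s+r)^9/9 - (s+r)^10/10) - Real.log (1+s+r)|
      ≤ (s+r)^11 / (1 - (s+r)) := by
  have hxa : |(-(s+r))| < 1 := by rw [abs_neg, abs_of_pos (by linarith)]; exact hx
  have h1 := Real.abs_log_sub_add_sum_range_le hxa 10
  rw [abs_neg, abs_of_pos (by linarith : (0:ℝ) < s + r)] at h1
  have e1 : (1:ℝ) - -(s+r) = 1 + s + r := by ring
  rw [e1] at h1
  have hsum : (∑ i ∈ Finset.range 10, (-(s+r)) ^ (i + 1) / ((i:ℝ) + 1))
      = -((s+r) - (s+r)^2/2 + (s+r)^3/3 - (s+r)^4/4 + (s+r)^5/5 - (s+r)^6/6 + (s+r)^7/7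
          - (s+r)^8/8 + (s+r)^9/9 - (s+r)^10/10) := by
    norm_num [Finset.sum_range_succ]
    ring
  rw [hsum] at h1
  calc |_ - Real.log (1+s+r)|
      = |-((s+r) - (s+r)^2/2 + (s+r)^3/3 - (s+r)^4/4 + (s+r)^5/5 - (s+r)^6/6 + (s+r)^7/7
          - (s+r)^8/8 + (s+r)^9/9 - (s+r)^10/10) + Real.log (1+s+r)| := by
        rw [abs_sub_comm]; ring_nf
    _ ≤ _ := h1

lemma zh_log_lower (s r : ℝ) (hs : 0 < s) (hr : 0 < r) (hsr : s < r) (hx : s + r < 1)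
    (hr2 : r^2 = s^2 + 2*s) :
    |((r-s) + (r-s)^2/2 + (r-s)^3/3 + (r-s)^4/4 + (r-s)^5/5 + (r-s)^6/6 + (r-s)^7/7
        + (r-s)^8/8 + (r-s)^9/9 + (r-s)^10/10) - Real.log (1+s+r)|
      ≤ (r-s)^11 / (1 - (r-s)) := by
  have hxa : |r - s| < 1 := by rw [abs_of_pos (by linarith)]; linarith
  have h1 := Real.abs_log_sub_add_sum_range_le hxa 10
  rw [abs_of_pos (by linarith : (0:ℝ) < r - s)] at h1
  have hmul : (1 - (r - s)) * (1 + s + r) = 1 := by linear_combination (-1 : ℝ) * hr2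
  have hinv : (1:ℝ) - (r - s) = (1 + s + r)⁻¹ := eq_inv_of_mul_eq_one_left hmul
  have hlog : Real.log (1 - (r - s)) = -Real.log (1 + s + r) := by rw [hinv, Real.log_inv]
  rw [hlog] at h1
  have hsum : (∑ i ∈ Finset.range 10, (r-s) ^ (i + 1) / ((i:ℝ) + 1))
      = ((r-s) + (r-s)^2/2 + (r-s)^3/3 + (r-s)^4/4 + (r-s)^5/5 + (r-s)^6/6 + (r-s)^7/7
          + (r-s)^8/8 + (r-s)^9/9 + (r-s)^10/10) := by
    norm_num [Finset.sum_range_succ]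
  rw [hsum] at h1
  calc |_ - Real.log (1+s+r)| = |((r-s) + (r-s)^2/2 + (r-s)^3/3 + (r-s)^4/4 + (r-s)^5/5
        + (r-s)^6/6 + (r-s)^7/7 + (r-s)^8/8 + (r-s)^9/9 + (r-s)^10/10)
        + -Real.log (1+s+r)| := by ring_nf
    _ ≤ _ := h1

lemma zh_eta_bound (s r : ℝ) (hs : 0 < s) (hs1 : s ≤ 1/100) (hr2 : r^2 = s^2 + 2*s)
    (hr : 0 < r) (hsr : s < r) (hr15 : r ≤ 3/20) :
    |Real.log (1+s+r) - ((1 + s) - Cpol s)*r| ≤ 96*((s+r)*s^5) := by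
  have hx1 : s + r < 1 := by linarith
  have hlogu := zh_log_upper s r hs hr hx1
  have hlogl := zh_log_lower s r hs hr hsr hx1 hr2
  -- the error bounds
  have hden : (5/6:ℝ) ≤ 1 - (s+r) := by linarith
  have hsmul : s*r ≤ s*(3/20) := mul_le_mul_of_nonneg_left hr15 hs.le
  have p2 : s^2 ≤ s*(1/100) := by
    have := mul_le_mul_of_nonneg_left hs1 hs.le; nlinarith [this]
  have hsr2 : (s+r)^2 ≤ (12/5)*s := by
    have e : (s+r)^2 = 2*s^2 + 2*s + 2*(s*r) := by linear_combination hr2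
    rw [e]; linarith [p2, hsmul]
  have hx0 : (0:ℝ) < s + r := by linarith
  have h5 : ((s+r)^2)^5 ≤ ((12/5)*s)^5 := pow_le_pow_left₀ (sq_nonneg _) hsr2 5
  have hx11 : (s+r)^11 ≤ (s+r) * ((12/5)*s)^5 := by
    calc (s+r)^11 = (s+r)*((s+r)^2)^5 := by ring
      _ ≤ (s+r)*((12/5)*s)^5 := mul_le_mul_of_nonneg_left h5 hx0.le
  have hq5 : (0:ℝ) ≤ (s+r)*s^5 := by positivity
  have hEa : (s+r)^11 / (1 - (s+r)) ≤ 96*((s+r)*s^5) := by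
    rw [div_le_iff₀ (by linarith)]
    have hm : (5/6)*(96*((s+r)*s^5)) ≤ (1-(s+r))*(96*((s+r)*s^5)) :=
      mul_le_mul_of_nonneg_right hden (by positivity)
    nlinarith [hx11, hm, hq5]
  have h0rs : (0:ℝ) ≤ r - s := by linarith
  have hnum : (r-s)^11 ≤ (s+r)^11 := pow_le_pow_left₀ h0rs (by linarith) 11
  have hd2 : (0:ℝ) < 1 - (s+r) := by linarith
  have hEb : (r-s)^11 / (1 - (r-s)) ≤ 96*((s+r)*s^5) := by
    calc (r-s)^11 / (1 - (r-s)) ≤ (s+r)^11 / (1 - (s+r)) := by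
          apply div_le_div₀ (by positivity) hnum hd2 (by linarith)
      _ ≤ 96*((s+r)*s^5) := hEa
  have hu : |((s+r) - (s+r)^2/2 + (s+r)^3/3 - (s+r)^4/4 + (s+r)^5/5 - (s+r)^6/6 + (s+r)^7/7
      - (s+r)^8/8 + (s+r)^9/9 - (s+r)^10/10) - Real.log (1+s+r)| ≤ 96*((s+r)*s^5) :=
    le_trans hlogu hEa
  have hl : |((r-s) + (r-s)^2/2 + (r-s)^3/3 + (r-s)^4/4 + (r-s)^5/5 + (r-s)^6/6 + (r-s)^7/7
      + (r-s)^8/8 + (r-s)^9/9 + (r-s)^10/10) - Real.log (1+s+r)| ≤ 96*((s+r)*s^5) :=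
    le_trans hlogl hEb
  -- the key polynomial identity
  have hT : ((s+r) - (s+r)^2/2 + (s+r)^3/3 - (s+r)^4/4 + (s+r)^5/5 - (s+r)^6/6 + (s+r)^7/7
        - (s+r)^8/8 + (s+r)^9/9 - (s+r)^10/10)
      + ((r-s) + (r-s)^2/2 + (r-s)^3/3 + (r-s)^4/4 + (r-s)^5/5 + (r-s)^6/6 + (r-s)^7/7
        + (r-s)^8/8 + (r-s)^9/9 + (r-s)^10/10)
      = 2*((1 + s) - Cpol s)*r := by
    unfold Cpol
    linear_combination ((2/3)*r + (2/5)*r^3 + (2/7)*r^5 + (2/9)*r^7 + (-6/5)*s*r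
      + (-10/7)*s*r^3 + (-14/9)*s*r^5 + (-2)*s*r^7 + (54/35)*s^2*r + (200/63)*s^2*r^3
      + (38/9)*s^2*r^5 + (-110/63)*s^3*r + (-64/9)*s^3*r^3 + (-26)*s^3*r^5 + (-22/21)*s^4*r
      + (-178/9)*s^4*r^3 + (-182/3)*s^5*r + (-382/5)*s^5*r^3 + (-6926/45)*s^6*r
      + (-502/5)*s^7*r) * hr2
  have e : Real.log (1+s+r) - ((1 + s) - Cpol s)*r
      = -((((s+r) - (s+r)^2/2 + (s+r)^3/3 - (s+r)^4/4 + (s+r)^5/5 - (s+r)^6/6 + (s+r)^7/7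
          - (s+r)^8/8 + (s+r)^9/9 - (s+r)^10/10) - Real.log (1+s+r))
        + (((r-s) + (r-s)^2/2 + (r-s)^3/3 + (r-s)^4/4 + (r-s)^5/5 + (r-s)^6/6 + (r-s)^7/7
          + (r-s)^8/8 + (r-s)^9/9 + (r-s)^10/10) - Real.log (1+s+r)))/2 := by
    linear_combination ((1:ℝ)/2) * hT
  rw [e, abs_div, abs_neg]
  rw [show |(2:ℝ)| = 2 by norm_num]
  have := abs_add_le
    (((s+r) - (s+r)^2/2 + (s+r)^3/3 - (s+r)^4/4 + (s+r)^5/5 - (s+r)^6/6 + (s+r)^7/7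
          - (s+r)^8/8 + (s+r)^9/9 - (s+r)^10/10) - Real.log (1+s+r))
    (((r-s) + (r-s)^2/2 + (r-s)^3/3 + (r-s)^4/4 + (r-s)^5/5 + (r-s)^6/6 + (r-s)^7/7
          + (r-s)^8/8 + (r-s)^9/9 + (r-s)^10/10) - Real.log (1+s+r))
  linarith

lemma zh_Cpol_bounds (s : ℝ) (hs : 0 < s) (hs1 : s ≤ 1/100) :
    (13/10)*s ≤ Cpol s ∧ Cpol s ≤ (14/10)*s := by
  have w1 : s^1 ≤ (1/100)^1 := pow_le_pow_left₀ hs.le hs1 1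
  have w2 : s^2 ≤ (1/100)^2 := pow_le_pow_left₀ hs.le hs1 2
  have w3 : s^3 ≤ (1/100)^3 := pow_le_pow_left₀ hs.le hs1 3
  have w4 : s^4 ≤ (1/100)^4 := pow_le_pow_left₀ hs.le hs1 4
  have w5 : s^5 ≤ (1/100)^5 := pow_le_pow_left₀ hs.le hs1 5
  have w6 : s^6 ≤ (1/100)^6 := pow_le_pow_left₀ hs.le hs1 6
  have w7 : s^7 ≤ (1/100)^7 := pow_le_pow_left₀ hs.le hs1 7
  have w8 : s^8 ≤ (1/100)^8 := pow_le_pow_left₀ hs.le hs1 8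
  have p2 : s^2 ≤ s*(1/100) := by
    have := mul_le_mul_of_nonneg_left w1 hs.le; linarith [this]
  have p3 : s^3 ≤ s*(1/100)^2 := by
    have := mul_le_mul_of_nonneg_left w2 hs.le; linarith [this]
  have p4 : s^4 ≤ s*(1/100)^3 := by
    have := mul_le_mul_of_nonneg_left w3 hs.le; linarith [this]
  have p5 : s^5 ≤ s*(1/100)^4 := by
    have := mul_le_mul_of_nonneg_left w4 hs.le; linarith [this]
  have p6 : s^6 ≤ s*(1/100)^5 := by
    have := mul_le_mul_of_nonneg_left w5 hs.le; linarith [this]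
  have p7 : s^7 ≤ s*(1/100)^6 := by
    have := mul_le_mul_of_nonneg_left w6 hs.le; linarith [this]
  have p8 : s^8 ≤ s*(1/100)^7 := by
    have := mul_le_mul_of_nonneg_left w7 hs.le; linarith [this]
  have p9 : s^9 ≤ s*(1/100)^8 := by
    have := mul_le_mul_of_nonneg_left w8 hs.le; linarith [this]
  have q2 : (0:ℝ) ≤ s^2 := pow_nonneg hs.le 2
  have q3 : (0:ℝ) ≤ s^3 := pow_nonneg hs.le 3
  have q4 : (0:ℝ) ≤ s^4 := pow_nonneg hs.le 4
  have q5 : (0:ℝ) ≤ s^5 := pow_nonneg hs.le 5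
  have q6 : (0:ℝ) ≤ s^6 := pow_nonneg hs.le 6
  have q7 : (0:ℝ) ≤ s^7 := pow_nonneg hs.le 7
  have q8 : (0:ℝ) ≤ s^8 := pow_nonneg hs.le 8
  have q9 : (0:ℝ) ≤ s^9 := pow_nonneg hs.le 9
  constructor <;> (unfold Cpol; linarith)

lemma zh_F2_bound (s r : ℝ) (hs : 0 < s) (hs1 : s ≤ 1/100) (hr2 : r^2 = s^2 + 2*s)
    (hr : 0 < r) (hsr : s < r) (hr15 : r ≤ 3/20) :
    |((1+s)*r - Real.log (1+s+r))^2 - (s^2+2*s)*(Cpol s)^2| ≤ 600*s^7 := by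
  have heta := zh_eta_bound s r hs hs1 hr2 hr hsr hr15
  set L := Real.log (1+s+r) with hL
  set c := Cpol s with hc
  set eta := L - ((1+s) - c)*r with heta_def
  have hF2eq : ((1+s)*r - L)^2 - (s^2+2*s)*c^2 = -2*c*r*eta + eta^2 := by
    rw [heta_def]; linear_combination (c^2) * hr2
  rw [hF2eq]
  have w4 : s^4 ≤ (1/100)^4 := pow_le_pow_left₀ hs.le hs1 4
  have q7 : (0:ℝ) ≤ s^7 := pow_nonneg hs.le 7
  obtain ⟨hCl, hCu⟩ := zh_Cpol_bounds s hs hs1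
  rw [← hc] at hCl hCu
  have hc0 : 0 ≤ c := le_trans (by linarith) hCl
  have h1 : |(-2*c*r*eta + eta^2)| ≤ 2*c*r*|eta| + eta^2 := by
    have hcr : (0:ℝ) ≤ 2*c*r := by positivity
    calc |(-2*c*r*eta + eta^2)| ≤ |(-2*c*r*eta)| + |eta^2| := abs_add_le _ _
      _ = 2*c*r*|eta| + eta^2 := by
          rw [abs_mul, abs_of_nonpos (by linarith : -2*c*r ≤ 0),
            abs_of_nonneg (sq_nonneg eta)]
          ring
  refine le_trans h1 ?_
  have m1 : 2*c*r ≤ 2*((14/10)*s)*r := by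
    have := mul_le_mul_of_nonneg_right hCu hr.le; linarith
  have t1 : 2*c*r*|eta| ≤ 2*((14/10)*s)*r*(96*((s+r)*s^5)) :=
    mul_le_mul m1 heta (abs_nonneg _) (by positivity)
  have t2 : 2*((14/10)*s)*r*(96*((s+r)*s^5)) = (1344/5)*(s^7*r) + (1344/5)*(s^6*r^2) := by
    ring
  have hA : s^7*r ≤ (3/20)*s^7 := by
    have := mul_le_mul_of_nonneg_left hr15 q7; linarith [this]
  have hB : s^6*r^2 = s^8 + 2*s^7 := by rw [hr2]; ring
  have h8 : s^8 ≤ (1/100)*s^7 := by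
    have := mul_le_mul_of_nonneg_left hs1 q7; linarith [this]
  have hsmul : s*r ≤ s*(3/20) := mul_le_mul_of_nonneg_left hr15 hs.le
  have p2 : s^2 ≤ s*(1/100) := by
    have := mul_le_mul_of_nonneg_left hs1 hs.le; nlinarith [this]
  have hsr2 : (s+r)^2 ≤ (12/5)*s := by
    have e : (s+r)^2 = 2*s^2 + 2*s + 2*(s*r) := by linear_combination hr2
    rw [e]; linarith [p2, hsmul]
  have habs2 : |eta| * |eta| ≤ (96*((s+r)*s^5))*(96*((s+r)*s^5)) :=
    mul_self_le_mul_self (abs_nonneg eta) heta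
  have heta2 : eta^2 ≤ 9216*((s+r)^2*(s^5)^2) := by
    rw [abs_mul_abs_self] at habs2; linarith [habs2]
  have h11 : (s+r)^2*(s^5)^2 ≤ ((12/5)*s)*(s^5)^2 :=
    mul_le_mul_of_nonneg_right hsr2 (by positivity)
  have h13 : s^7*s^4 ≤ s^7*(1/100)^4 := mul_le_mul_of_nonneg_left w4 q7
  have h14 : ((12/5)*s)*(s^5)^2 = (12/5)*(s^7*s^4) := by ring
  linarith [t1, t2, hA, hB, h8, heta2, h11, h13, h14, q7]

lemma zh_poly_bound (s : ℝ) (hs : 0 < s) (hs1 : s ≤ 1/100) :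
    |(9/32)*(s^2+2*s)*(Cpol s)^2 - (s + 1/10*s^2 - 2/175*s^3 + 37/15750*s^4)^3|
      ≤ 200000*s^7 := by
  have hs01 : s ≤ 1 := by linarith
  have u7 : (0:ℝ) ≤ s^7 := pow_nonneg hs.le 7
  have u8 : s^8 ≤ s^7 := pow_le_pow_of_le_one hs.le hs01 (by norm_num)
  have u9 : s^9 ≤ s^7 := pow_le_pow_of_le_one hs.le hs01 (by norm_num)
  have u10 : s^10 ≤ s^7 := pow_le_pow_of_le_one hs.le hs01 (by norm_num)
  have u11 : s^11 ≤ s^7 := pow_le_pow_of_le_one hs.le hs01 (by norm_num)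
  have u12 : s^12 ≤ s^7 := pow_le_pow_of_le_one hs.le hs01 (by norm_num)
  have u13 : s^13 ≤ s^7 := pow_le_pow_of_le_one hs.le hs01 (by norm_num)
  have u14 : s^14 ≤ s^7 := pow_le_pow_of_le_one hs.le hs01 (by norm_num)
  have u15 : s^15 ≤ s^7 := pow_le_pow_of_le_one hs.le hs01 (by norm_num)
  have u16 : s^16 ≤ s^7 := pow_le_pow_of_le_one hs.le hs01 (by norm_num)
  have u17 : s^17 ≤ s^7 := pow_le_pow_of_le_one hs.le hs01 (by norm_num)
  have u18 : s^18 ≤ s^7 := pow_le_pow_of_le_one hs.le hs01 (by norm_num)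
  have u19 : s^19 ≤ s^7 := pow_le_pow_of_le_one hs.le hs01 (by norm_num)
  have u20 : s^20 ≤ s^7 := pow_le_pow_of_le_one hs.le hs01 (by norm_num)
  have v8 : (0:ℝ) ≤ s^8 := pow_nonneg hs.le 8
  have v9 : (0:ℝ) ≤ s^9 := pow_nonneg hs.le 9
  have v10 : (0:ℝ) ≤ s^10 := pow_nonneg hs.le 10
  have v11 : (0:ℝ) ≤ s^11 := pow_nonneg hs.le 11
  have v12 : (0:ℝ) ≤ s^12 := pow_nonneg hs.le 12
  have v13 : (0:ℝ) ≤ s^13 := pow_nonneg hs.le 13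
  have v14 : (0:ℝ) ≤ s^14 := pow_nonneg hs.le 14
  have v15 : (0:ℝ) ≤ s^15 := pow_nonneg hs.le 15
  have v16 : (0:ℝ) ≤ s^16 := pow_nonneg hs.le 16
  have v17 : (0:ℝ) ≤ s^17 := pow_nonneg hs.le 17
  have v18 : (0:ℝ) ≤ s^18 := pow_nonneg hs.le 18
  have v19 : (0:ℝ) ≤ s^19 := pow_nonneg hs.le 19
  have v20 : (0:ℝ) ≤ s^20 := pow_nonneg hs.le 20
  rw [abs_le]
  unfold Cpol
  constructor <;> linarith

lemma zh_key (s : ℝ) (hs : 0 < s) (hs1 : s ≤ 1/100) :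
    |(2:ℝ) ^ (-(1:ℝ)/3) * zetaHer (1+s)
        - (s + 1/10*s^2 - 2/175*s^3 + 37/15750*s^4)| ≤ 2000000*s^5 := by
  have hpos : (0:ℝ) < s^2 + 2*s := by nlinarith
  obtain ⟨r, hrdef⟩ : ∃ r : ℝ, r = Real.sqrt (s^2+2*s) := ⟨_, rfl⟩
  have hr2 : r^2 = s^2 + 2*s := by rw [hrdef]; exact Real.sq_sqrt hpos.le
  have hr : 0 < r := by rw [hrdef]; exact Real.sqrt_pos.mpr hpos
  have hsr : s < r := by nlinarith [hr2, hr, hs]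
  have hr15 : r ≤ 3/20 := by
    have h1 : s^2 + 2*s ≤ (3/20)^2 := by nlinarith
    calc r = Real.sqrt (s^2+2*s) := hrdef
      _ ≤ Real.sqrt ((3/20)^2) := Real.sqrt_le_sqrt h1
      _ = 3/20 := Real.sqrt_sq (by norm_num)
  obtain ⟨F, hFdef⟩ : ∃ F : ℝ, F = (1+s)*r - Real.log (1+s+r) := ⟨_, rfl⟩
  obtain ⟨p, hp⟩ : ∃ p : ℝ, p = s + 1/10*s^2 - 2/175*s^3 + 37/15750*s^4 := ⟨_, rfl⟩
  have heta := zh_eta_bound s r hs hs1 hr2 hr hsr hr15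
  obtain ⟨hCl, hCu⟩ := zh_Cpol_bounds s hs hs1
  -- F is positive
  have hFpos : 0 < F := by
    have hetaU : Real.log (1+s+r) - ((1 + s) - Cpol s)*r ≤ 96*((s+r)*s^5) :=
      (abs_le.mp heta).2
    have hCr : (13/10)*(s*r) ≤ (Cpol s)*r := by
      have := mul_le_mul_of_nonneg_right hCl hr.le; linarith
    have w4 : s^4 ≤ (1/100)^4 := pow_le_pow_left₀ hs.le hs1 4
    have p5 : s^5 ≤ s*(1/100)^4 := by
      have := mul_le_mul_of_nonneg_left w4 hs.le; linarith [this]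
    have hss : s*s ≤ s*r := mul_le_mul_of_nonneg_left hsr.le hs.le
    have h96 : 96*((s+r)*s^5) ≤ 96*((s+r)*(s*(1/100)^4)) := by
      have := mul_le_mul_of_nonneg_left p5 (by linarith : (0:ℝ) ≤ s+r)
      nlinarith [this]
    have he : (s+r)*(s*(1/100)^4) = (1/100)^4*(s*s) + (1/100)^4*(s*r) := by ring
    have hsrpos : 0 < s*r := mul_pos hs hr
    rw [hFdef]
    nlinarith [hetaU, hCr, h96, he, hss, hsrpos]
  -- cube bound
  have hF2 := zh_F2_bound s r hs hs1 hr2 hr hsr hr15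
  have hpoly := zh_poly_bound s hs hs1
  have hM : |(9/32)*F^2 - p^3| ≤ 300000*s^7 := by
    have e : (9/32)*F^2 - p^3
        = (9/32)*(((1+s)*r - Real.log (1+s+r))^2 - (s^2+2*s)*(Cpol s)^2)
          + ((9/32)*(s^2+2*s)*(Cpol s)^2 - (s + 1/10*s^2 - 2/175*s^3 + 37/15750*s^4)^3) := by
      rw [hFdef, hp]; ring
    rw [e]
    refine le_trans (abs_add_le _ _) ?_
    rw [abs_mul, show |(9:ℝ)/32| = 9/32 by norm_num]
    linarith [hF2, hpoly, pow_nonneg hs.le 7]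
  -- rewrite the zeta expression
  have hzeta : (2:ℝ) ^ (-(1:ℝ)/3) * zetaHer (1+s) = ((9/32)*F^2) ^ ((1:ℝ)/3) := by
    have ht2 : (1+s)^2 - 1 = s^2 + 2*s := by ring
    unfold zetaHer
    rw [ht2, ← hrdef]
    have hbase : (0:ℝ) ≤ (3/4)*F := by linarith
    rw [show ((2:ℝ)/3) = (2:ℝ)*(1/3) by norm_num]
    rw [show ((3:ℝ)/4 * ((1+s)*r - Real.log (1+s+r))) = (3/4)*F from by rw [hFdef]]
    rw [Real.rpow_mul hbase]
    rw [show ((3/4*F:ℝ) ^ (2:ℝ)) = (3/4*F)^(2:ℕ) from by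
      rw [← Real.rpow_natCast (3/4*F) 2]; norm_num]
    rw [show (-(1:ℝ)/3) = (-1:ℝ)*(1/3) by norm_num, Real.rpow_mul (by norm_num : (0:ℝ) ≤ 2)]
    rw [Real.rpow_neg_one]
    rw [← Real.mul_rpow (by norm_num) (by positivity)]
    congr 1
    ring
  obtain ⟨g, hg⟩ : ∃ g : ℝ, g = ((9/32)*F^2) ^ ((1:ℝ)/3) := ⟨_, rfl⟩
  rw [hzeta, ← hg]
  have hg3 : g^(3:ℕ) = (9/32)*F^2 := by
    rw [hg, ← Real.rpow_natCast (((9/32)*F^2) ^ ((1:ℝ)/3)) 3,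
      ← Real.rpow_mul (by positivity)]
    norm_num
  have hg0 : 0 ≤ g := by rw [hg]; exact Real.rpow_nonneg (by positivity) _
  have hcube : |g^3 - p^3| ≤ 300000*s^7 := by rw [hg3]; exact hM
  -- lower bound on p
  have q2 : (0:ℝ) ≤ s^2 := pow_nonneg hs.le 2
  have q4 : (0:ℝ) ≤ s^4 := pow_nonneg hs.le 4
  have w2 : s^2 ≤ (1/100)^2 := pow_le_pow_left₀ hs.le hs1 2
  have p3 : s^3 ≤ s*(1/100)^2 := by
    have := mul_le_mul_of_nonneg_left w2 hs.le; linarith [this]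
  have hPl : s/2 ≤ p := by rw [hp]; linarith
  -- conclude
  have hpp : (s/2)*(s/2) ≤ p*p := mul_self_le_mul_self (by linarith) hPl
  have hQ : (3/16)*s^2 ≤ g^2 + g*p + p^2 := by nlinarith [sq_nonneg (g + p/2), hpp]
  obtain ⟨hcl, hcu⟩ := abs_le.mp hcube
  rw [abs_le]
  constructor
  · by_contra hcon
    push_neg at hcon
    have h' : 2000000*s^5 ≤ p - g := by linarith
    have hkey := mul_le_mul h' hQ (by positivity) (by linarith [pow_pos hs 5])
    linarith [hkey, hcl, pow_pos hs 7]
  · by_contra hcon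
    push_neg at hcon
    have h' : 2000000*s^5 ≤ g - p := by linarith
    have hkey := mul_le_mul h' hQ (by positivity) (by linarith [pow_pos hs 5])
    linarith [hkey, hcu, pow_pos hs 7]

/-- Local expansion of the Liouville variable at the turning point `t = 1`:
`2^{−1/3}ζ(t) = (t−1) + (1/10)(t−1)² − (2/175)(t−1)³ + (37/15750)(t−1)⁴ + O((t−1)⁵)`
as `t → 1⁺`. -/
theorem stmt9 :
    (fun t : ℝ => (2 : ℝ) ^ (-(1 : ℝ) / 3) * zetaHer t -
        ((t - 1) + (1 / 10) * (t - 1) ^ 2 - (2 / 175) * (t - 1) ^ 3 +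
          (37 / 15750) * (t - 1) ^ 4)) =O[nhdsWithin 1 (Set.Ioi 1)]
      (fun t : ℝ => (t - 1) ^ 5) := by
  rw [Asymptotics.isBigO_iff]
  refine ⟨2000000, ?_⟩
  filter_upwards [Ioo_mem_nhdsGT_of_mem
    (by norm_num : (1:ℝ) ∈ Set.Ico (1:ℝ) (101/100))] with t ht
  obtain ⟨ht1, ht2⟩ := ht
  have hs : 0 < t - 1 := by linarith
  have hs1 : t - 1 ≤ 1/100 := by linarith
  have hkey := zh_key (t-1) hs hs1
  rw [show (1:ℝ) + (t-1) = t by ring] at hkey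
  rw [Real.norm_eq_abs, Real.norm_eq_abs, abs_of_pos (pow_pos hs 5)]
  calc |(2:ℝ) ^ (-(1:ℝ)/3) * zetaHer t - ((t - 1) + (1/10)*(t - 1)^2 - (2/175)*(t - 1)^3
        + (37/15750)*(t - 1)^4)|
      = |(2:ℝ) ^ (-(1:ℝ)/3) * zetaHer t - ((t-1) + 1/10*(t-1)^2 - 2/175*(t-1)^3
        + 37/15750*(t-1)^4)| := by ring_nf
    _ ≤ 2000000*(t-1)^5 := hkey
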